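/- Let G = (V,D,B) be a mixed graph and G̃ its bidirected subdivision, obtained by replacing each bidirected edge i ↔ j by a new vertex v_{(i,j)} together with directed edges v_{(i,j)} → i and v_{(i,j)} → j. Let G*_flow and G̃*_flow be the corresponding unit-capacity flow networks (with duplicated vertex sets and edges as in the t-separation construction). Then for any S, T ⊂ V, the max-flow from S to T′ in G*_flow equals the max-flow from S to T′ in G̃*_flow. -/

import Mathlib

open scoped BigOperators

/-- A mixed graph on `n` vertices: directed edges `D` and symmetric bidirected
edges `B`, with no self-loops. -/
structure MixedGraph (n : ℕ) where
  D : Fin n → Fin n → Prop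
  B : Fin n → Fin n → Prop
  B_symm : ∀ i j, B i j → B j i
  D_irrefl : ∀ i, ¬ D i i
  B_irrefl : ∀ i, ¬ B i i

namespace MixedGraph

variable {n : ℕ}

/-- A trek from `v` to `w` in a mixed graph: a walk with no colliding arrowheads,
consisting of a left-hand side `L 0 = v, L 1, …, L p` (each step along a directed
edge `L (i+1) → L i`, traversed backwards from `v` up to the top `L p`),
then either (`bid = true`) one bidirected edge `L p ↔ R 0`, or (`bid = false`)
`L p = R 0`, and a right-hand side `R 0, …, R q = w` walking forwards along
directed edges `R j → R (j+1)`.  Vertices may repeat (treks are walks). -/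
structure Trek (G : MixedGraph n) (v w : Fin n) where
  p : ℕ
  q : ℕ
  L : Fin (p + 1) → Fin n
  R : Fin (q + 1) → Fin n
  hL : ∀ i : Fin p, G.D (L i.succ) (L i.castSucc)
  hR : ∀ i : Fin q, G.D (R i.castSucc) (R i.succ)
  bid : Bool
  hconn : if bid then G.B (L (Fin.last p)) (R 0) else L (Fin.last p) = R 0
  hv : L 0 = v
  hw : R (Fin.last q) = w

namespace Trek

variable {G : MixedGraph n} {v w : Fin n}

/-- The vertices on the left-hand side of a trek (including the top). -/
def leftVerts (π : Trek G v w) : Set (Fin n) := Set.range π.L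

/-- The vertices on the right-hand side of a trek (including the top). -/
def rightVerts (π : Trek G v w) : Set (Fin n) := Set.range π.R

/-- The trek monomial of a trek, with respect to parameter matrices
`lam` (directed edge coefficients) and `om` (error covariances):
`ω_{top-left, top-right} ∏ λ_{x y}` over all directed edges of the trek. -/
def monom {R' : Type*} [CommSemiring R'] (lam om : Fin n → Fin n → R')
    (π : Trek G v w) : R' :=
  om (π.L (Fin.last π.p)) (π.R 0)
    * (∏ i : Fin π.p, lam (π.L i.succ) (π.L i.castSucc))
    * ∏ i : Fin π.q, lam (π.R i.castSucc) (π.R i.succ)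

/-- A half-trek is a trek whose left-hand side consists of a single vertex. -/
def IsHalfTrek (π : Trek G v w) : Prop := π.p = 0

/-- The trek uses the directed edge `a → b` on its left-hand side. -/
def usesLeft (π : Trek G v w) (a b : Fin n) : Prop :=
  ∃ i : Fin π.p, π.L i.succ = a ∧ π.L i.castSucc = b

/-- The trek uses the directed edge `a → b` on its right-hand side. -/
def usesRight (π : Trek G v w) (a b : Fin n) : Prop :=
  ∃ i : Fin π.q, π.R i.castSucc = a ∧ π.R i.succ = b

/-- The trek is non-empty (uses at least one edge). -/
def Nonemp (π : Trek G v w) : Prop := 0 < π.p ∨ 0 < π.q ∨ π.bid = true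

end Trek

/-- `w` is trek reachable from `v`: there is a non-empty trek from `v` to `w`. -/
def tr (G : MixedGraph n) (v w : Fin n) : Prop :=
  ∃ π : Trek G v w, π.Nonemp

/-- `w` is half-trek reachable from `v`. -/
def htr (G : MixedGraph n) (v w : Fin n) : Prop :=
  ∃ π : Trek G v w, π.IsHalfTrek ∧ π.Nonemp

/-- `w` is a descendant of `v` (non-empty directed path from `v` to `w`). -/
def des (G : MixedGraph n) (v w : Fin n) : Prop :=
  Relation.TransGen G.D v w

/-- The parents of `w`. -/
def pa (G : MixedGraph n) (w : Fin n) : Set (Fin n) := {z | G.D z w}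

/-- The siblings of `w`. -/
def sib (G : MixedGraph n) (w : Fin n) : Set (Fin n) := {z | G.B z w}

end MixedGraph

/-! ### Unit-capacity flow networks -/

open scoped BigOperators

/-- An integral flow of value `r` from the source set `S` to the target set `T`
in the directed graph with edge relation `E`, where every edge and every vertex
has capacity `1`.  Flow enters sources and leaves targets only. -/
structure UnitFlow {V : Type*} [Fintype V] [DecidableEq V]
    (E : V → V → Prop) (S T : Finset V) (r : ℕ) where
  f : V → V → ℕ
  supp : ∀ u v, f u v ≠ 0 → E u v
  edge_cap : ∀ u v, f u v ≤ 1
  vert_cap_in : ∀ v, (∑ u, f u v) ≤ 1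
  vert_cap_out : ∀ v, (∑ u, f v u) ≤ 1
  no_into_src : ∀ s ∈ S, (∑ u, f u s) = 0
  no_outof_tgt : ∀ t ∈ T, (∑ u, f t u) = 0
  conserve : ∀ v, v ∉ S → v ∉ T → (∑ u, f u v) = (∑ u, f v u)
  value : (∑ s ∈ S, ∑ u, f s u) = r

/-- The maximum flow from `S` to `T` in the unit-capacity network `E`. -/
noncomputable def maxFlow {V : Type*} [Fintype V] [DecidableEq V]
    (E : V → V → Prop) (S T : Finset V) : ℕ :=
  sSup {r | Nonempty (UnitFlow E S T r)}

/-- The edge relation of the flow network `G*_flow` associated with a vertex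
set `V`, a left directed edge set `DL`, a right directed edge set `DR`, and a
bidirected edge set `B`: on the doubled vertex set `V ⊕ V` (with `Sum.inl i`
playing the role of `i` and `Sum.inr i` of `i′`) there are edges `i → j` for
`(j, i) ∈ DL`, `i → i′` for all `i`, `i → j′` for `(i, j) ∈ B`, and
`i′ → j′` for `(i, j) ∈ DR`. -/
def flowEdgesLR {V : Type*} (DL DR B : V → V → Prop) :
    (V ⊕ V) → (V ⊕ V) → Prop
  | Sum.inl i, Sum.inl j => DL j i
  | Sum.inl i, Sum.inr j => i = j ∨ B i j
  | Sum.inr i, Sum.inr j => DR i j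
  | Sum.inr _, Sum.inl _ => False

/-- The flow network `G_flow` of a mixed graph, in which both sides use all
directed edges. -/
def MixedGraph.flowEdges {n : ℕ} (G : MixedGraph n) :
    (Fin n ⊕ Fin n) → (Fin n ⊕ Fin n) → Prop :=
  flowEdgesLR G.D G.D G.B

/-! ### STATEMENT 11: bidirected subdivision preserves max-flow -/

/-- The left/right directed edge relation of the bidirected subdivision: each
bidirected edge `i ↔ j` (represented once, with `i < j`) is replaced by a new
vertex `v_{(i,j)}` (the vertex `Sum.inr (i, j)`) with directed edges
`v_{(i,j)} → i` and `v_{(i,j)} → j`, which are added to the given directed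
edge set. -/
def subdivideEdges {n : ℕ} (Dir B : Fin n → Fin n → Prop) :
    (Fin n ⊕ (Fin n × Fin n)) → (Fin n ⊕ (Fin n × Fin n)) → Prop
  | Sum.inl i, Sum.inl j => Dir i j
  | Sum.inr p, Sum.inl k => B p.1 p.2 ∧ p.1 < p.2 ∧ (k = p.1 ∨ k = p.2)
  | _, _ => False

namespace SubdivAux

open Finset

lemma natmul_eq {a d : ℕ} (h : a ≤ d) (h1 : d ≤ 1) : a * d = a := by
  interval_cases d <;> simp_all

lemma natmul_eq' {a d : ℕ} (h : a ≤ d) (h1 : d ≤ 1) : d * a = a := by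
  interval_cases d <;> simp_all

lemma flow_zero {V : Type*} [Fintype V] [DecidableEq V] {E : V → V → Prop} {S T : Finset V}
    {r : ℕ} (F : UnitFlow E S T r) {u v : V} (h : ¬ E u v) : F.f u v = 0 := by
  by_contra h'; exact h (F.supp u v h')

lemma split_sum {n : ℕ} (g : Fin n → ℕ) (i : Fin n) :
    ∑ k, g k = g i + ∑ k, (if i = k then 0 else g k) := by
  have h : ∀ k ∈ Finset.univ, g k = (if i = k then g k else 0) + (if i = k then 0 else g k) := by
    intro k _; split <;> simp
  rw [Finset.sum_congr rfl h, Finset.sum_add_distrib, Finset.sum_ite_eq]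
  simp

lemma sum_V2 {n : ℕ} (h : ((Fin n ⊕ (Fin n × Fin n)) ⊕ (Fin n ⊕ (Fin n × Fin n))) → ℕ) :
    ∑ u, h u = ((∑ i, h (Sum.inl (Sum.inl i)) + ∑ p, h (Sum.inl (Sum.inr p)))
      + (∑ i, h (Sum.inr (Sum.inl i)) + ∑ p, h (Sum.inr (Sum.inr p)))) := by
  rw [Fintype.sum_sum_type, Fintype.sum_sum_type, Fintype.sum_sum_type]

section Up

variable {n : ℕ} (f : (Fin n ⊕ Fin n) → (Fin n ⊕ Fin n) → ℕ)

/-- the bidirected part of a flow on the original network -/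
def bb (i k : Fin n) : ℕ := f (Sum.inl i) (Sum.inr k)

/-- the rerouted bidirected part: conflicting pairs `i → k'`, `k → i'` are replaced
by diagonal flows `i → i'`, `k → k'`. -/
def f0 (i k : Fin n) : ℕ :=
  if i = k then ∑ j, bb f i j * bb f j i else bb f i k - bb f i k * bb f k i

/-- total flow through the subdivision vertex `p` -/
def tt (p : Fin n × Fin n) : ℕ := if p.1 < p.2 then f0 f p.1 p.2 + f0 f p.2 p.1 else 0

/-- the lifted flow on the subdivided network -/
def fup : ((Fin n ⊕ (Fin n × Fin n)) ⊕ (Fin n ⊕ (Fin n × Fin n))) →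
    ((Fin n ⊕ (Fin n × Fin n)) ⊕ (Fin n ⊕ (Fin n × Fin n))) → ℕ
  | Sum.inl (Sum.inl i), Sum.inl (Sum.inl j) => f (Sum.inl i) (Sum.inl j)
  | Sum.inl (Sum.inl i), Sum.inl (Sum.inr p) =>
      if p.1 < p.2 then
        (if i = p.1 then f0 f p.1 p.2 else 0) + (if i = p.2 then f0 f p.2 p.1 else 0)
      else 0
  | Sum.inl (Sum.inl i), Sum.inr (Sum.inl k) => if i = k then f0 f i i else 0
  | Sum.inl (Sum.inr p), Sum.inr (Sum.inr q) => if p = q then tt f p else 0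
  | Sum.inr (Sum.inr p), Sum.inr (Sum.inl k) =>
      if p.1 < p.2 then
        (if k = p.2 then f0 f p.1 p.2 else 0) + (if k = p.1 then f0 f p.2 p.1 else 0)
      else 0
  | Sum.inr (Sum.inl i), Sum.inr (Sum.inl j) => f (Sum.inr i) (Sum.inr j)
  | _, _ => 0

variable {DL DR B : Fin n → Fin n → Prop} {S T : Finset (Fin n)} {r : ℕ}
variable (F : UnitFlow (flowEdgesLR DL DR B) (S.image Sum.inl) (T.image Sum.inr) r)

lemma bb_le_one (i k : Fin n) : bb F.f i k ≤ 1 := F.edge_cap _ _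

lemma row_le_one (i : Fin n) : ∑ k, bb F.f i k ≤ 1 := by
  have h := F.vert_cap_out (Sum.inl i)
  rw [Fintype.sum_sum_type] at h
  exact le_trans (Nat.le_add_left _ _) h

lemma col_le_one (k : Fin n) : ∑ i, bb F.f i k ≤ 1 := by
  have h := F.vert_cap_in (Sum.inr k)
  rw [Fintype.sum_sum_type] at h
  exact le_trans (Nat.le_add_right _ _) h

lemma c_le_bb (i k : Fin n) : bb F.f i k * bb F.f k i ≤ bb F.f i k := by
  have h := bb_le_one F k i
  calc bb F.f i k * bb F.f k i ≤ bb F.f i k * 1 := mul_le_mul_right h _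
    _ = bb F.f i k := mul_one _

lemma f0_le_one (i k : Fin n) : f0 F.f i k ≤ 1 := by
  unfold f0
  split
  · exact le_trans (Finset.sum_le_sum fun j _ => c_le_bb F i j) (row_le_one F i)
  · exact le_trans (Nat.sub_le _ _) (bb_le_one F i k)

lemma f0_le_bb {i k : Fin n} (h : i ≠ k) : f0 F.f i k ≤ bb F.f i k := by
  unfold f0; rw [if_neg h]; exact Nat.sub_le _ _

lemma f0_row (i : Fin n) :
    f0 F.f i i + ∑ k, (if i = k then 0 else f0 F.f i k) = ∑ k, bb F.f i k := by
  have hA : ∑ k, (if i = k then 0 else f0 F.f i k)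
      + ∑ k, (if i = k then 0 else bb F.f i k * bb F.f k i)
      = ∑ k, (if i = k then 0 else bb F.f i k) := by
    rw [← Finset.sum_add_distrib]
    apply Finset.sum_congr rfl
    intro k _
    split
    · simp
    · rename_i h
      unfold f0; rw [if_neg h]
      exact Nat.sub_add_cancel (c_le_bb F i k)
  have hB : f0 F.f i i = bb F.f i i * bb F.f i i
      + ∑ k, (if i = k then 0 else bb F.f i k * bb F.f k i) := by
    unfold f0; rw [if_pos rfl]
    exact split_sum (fun j => bb F.f i j * bb F.f j i) i
  have hC : bb F.f i i * bb F.f i i = bb F.f i i := natmul_eq le_rfl (bb_le_one F i i)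
  have hD : ∑ k, bb F.f i k = bb F.f i i + ∑ k, (if i = k then 0 else bb F.f i k) :=
    split_sum _ i
  omega

lemma f0_col (k : Fin n) :
    f0 F.f k k + ∑ i, (if k = i then 0 else f0 F.f i k) = ∑ i, bb F.f i k := by
  have hA : ∑ i, (if k = i then 0 else f0 F.f i k)
      + ∑ i, (if k = i then 0 else bb F.f i k * bb F.f k i)
      = ∑ i, (if k = i then 0 else bb F.f i k) := by
    rw [← Finset.sum_add_distrib]
    apply Finset.sum_congr rfl
    intro i _
    split
    · simp
    · rename_i h
      unfold f0; rw [if_neg (fun hh => h hh.symm)]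
      exact Nat.sub_add_cancel (c_le_bb F i k)
  have hB : f0 F.f k k = bb F.f k k * bb F.f k k
      + ∑ i, (if k = i then 0 else bb F.f i k * bb F.f k i) := by
    unfold f0; rw [if_pos rfl]
    rw [split_sum (fun j => bb F.f k j * bb F.f j k) k]
    congr 1
    apply Finset.sum_congr rfl
    intro i _
    split
    · rfl
    · rw [mul_comm]
  have hC : bb F.f k k * bb F.f k k = bb F.f k k := natmul_eq le_rfl (bb_le_one F k k)
  have hD : ∑ i, bb F.f i k = bb F.f k k + ∑ i, (if k = i then 0 else bb F.f i k) :=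
    split_sum _ k
  omega

lemma f0_pair {i k : Fin n} (h : i ≠ k) : f0 F.f i k + f0 F.f k i ≤ 1 := by
  have hx := bb_le_one F i k
  have hy := bb_le_one F k i
  unfold f0
  rw [if_neg h, if_neg (Ne.symm h)]
  rcases Nat.le_one_iff_eq_zero_or_eq_one.mp hx with h1 | h1 <;>
    rcases Nat.le_one_iff_eq_zero_or_eq_one.mp hy with h2 | h2 <;>
      rw [h1, h2] <;> norm_num

lemma tt_le_one (p : Fin n × Fin n) : tt F.f p ≤ 1 := by
  unfold tt
  split
  · exact f0_pair F (ne_of_lt (by assumption))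
  · exact Nat.zero_le 1

lemma f0_supp {i k : Fin n} (h : i ≠ k) (hne : f0 F.f i k ≠ 0) : B i k := by
  have hb : bb F.f i k ≠ 0 := fun h0 => hne (Nat.le_zero.mp (h0 ▸ f0_le_bb F h))
  have := F.supp _ _ hb
  simp only [flowEdgesLR] at this
  rcases this with h1 | h1
  · exact absurd h1 h
  · exact h1

end Up

end SubdivAux
namespace SubdivAux

section Up2

open Finset

variable {n : ℕ} (f : (Fin n ⊕ Fin n) → (Fin n ⊕ Fin n) → ℕ)

lemma L1 (i : Fin n) :
    ∑ p : Fin n × Fin n, fup f (Sum.inl (Sum.inl i)) (Sum.inl (Sum.inr p))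
      = ∑ k, (if i = k then 0 else f0 f i k) := by
  rw [Fintype.sum_prod_type]
  have h1 : ∀ a b : Fin n, fup f (Sum.inl (Sum.inl i)) (Sum.inl (Sum.inr (a, b)))
      = (if i = a then (if a < b then f0 f a b else 0) else 0)
        + (if i = b then (if a < b then f0 f b a else 0) else 0) := by
    intro a b
    simp only [fup]
    split_ifs <;> omega
  have h2 : (∑ a, ∑ b, fup f (Sum.inl (Sum.inl i)) (Sum.inl (Sum.inr (a, b)))) =
      (∑ a, ∑ b, (if i = a then (if a < b then f0 f a b else 0) else 0))
      + ∑ a, ∑ b, (if i = b then (if a < b then f0 f b a else 0) else 0) := by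
    rw [← Finset.sum_add_distrib]
    apply Finset.sum_congr rfl; intro a _
    rw [← Finset.sum_add_distrib]
    exact Finset.sum_congr rfl fun b _ => h1 a b
  rw [h2]
  have h3 : (∑ a, ∑ b, (if i = a then (if a < b then f0 f a b else 0) else 0))
      = ∑ b, (if i < b then f0 f i b else 0) := by
    have e : ∀ a : Fin n, (∑ b, (if i = a then (if a < b then f0 f a b else 0) else 0))
        = if i = a then (∑ b, if a < b then f0 f a b else 0) else 0 := by
      intro a; split <;> simp
    rw [Finset.sum_congr rfl fun a _ => e a, Finset.sum_ite_eq]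
    simp
  have h4 : (∑ a, ∑ b, (if i = b then (if a < b then f0 f b a else 0) else 0))
      = ∑ a, (if a < i then f0 f i a else 0) := by
    rw [Finset.sum_comm]
    have e : ∀ b : Fin n, (∑ a, (if i = b then (if a < b then f0 f b a else 0) else 0))
        = if i = b then (∑ a, if a < b then f0 f b a else 0) else 0 := by
      intro b; split <;> simp
    rw [Finset.sum_congr rfl fun b _ => e b, Finset.sum_ite_eq]
    simp
  rw [h3, h4, ← Finset.sum_add_distrib]
  apply Finset.sum_congr rfl
  intro k _
  rcases lt_trichotomy i k with h | h | h
  · rw [if_pos h, if_neg (asymm h), if_neg (ne_of_lt h), add_zero]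
  · subst h; simp
  · rw [if_neg (asymm h), if_pos h, if_neg (ne_of_gt h), zero_add]

lemma L2 (k : Fin n) :
    ∑ p : Fin n × Fin n, fup f (Sum.inr (Sum.inr p)) (Sum.inr (Sum.inl k))
      = ∑ i, (if k = i then 0 else f0 f i k) := by
  rw [Fintype.sum_prod_type]
  have h1 : ∀ a b : Fin n, fup f (Sum.inr (Sum.inr (a, b))) (Sum.inr (Sum.inl k))
      = (if k = b then (if a < b then f0 f a b else 0) else 0)
        + (if k = a then (if a < b then f0 f b a else 0) else 0) := by
    intro a b
    simp only [fup]
    split_ifs <;> omega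
  have h2 : (∑ a, ∑ b, fup f (Sum.inr (Sum.inr (a, b))) (Sum.inr (Sum.inl k))) =
      (∑ a, ∑ b, (if k = b then (if a < b then f0 f a b else 0) else 0))
      + ∑ a, ∑ b, (if k = a then (if a < b then f0 f b a else 0) else 0) := by
    rw [← Finset.sum_add_distrib]
    apply Finset.sum_congr rfl; intro a _
    rw [← Finset.sum_add_distrib]
    exact Finset.sum_congr rfl fun b _ => h1 a b
  rw [h2]
  have h3 : (∑ a, ∑ b, (if k = b then (if a < b then f0 f a b else 0) else 0))
      = ∑ a, (if a < k then f0 f a k else 0) := by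
    rw [Finset.sum_comm]
    have e : ∀ b : Fin n, (∑ a, (if k = b then (if a < b then f0 f a b else 0) else 0))
        = if k = b then (∑ a, if a < b then f0 f a b else 0) else 0 := by
      intro b; split <;> simp
    rw [Finset.sum_congr rfl fun b _ => e b, Finset.sum_ite_eq]
    simp
  have h4 : (∑ a, ∑ b, (if k = a then (if a < b then f0 f b a else 0) else 0))
      = ∑ b, (if k < b then f0 f b k else 0) := by
    have e : ∀ a : Fin n, (∑ b, (if k = a then (if a < b then f0 f b a else 0) else 0))
        = if k = a then (∑ b, if a < b then f0 f b a else 0) else 0 := by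
      intro a; split <;> simp
    rw [Finset.sum_congr rfl fun a _ => e a, Finset.sum_ite_eq]
    simp
  rw [h3, h4, ← Finset.sum_add_distrib]
  apply Finset.sum_congr rfl
  intro i _
  rcases lt_trichotomy i k with h | h | h
  · rw [if_pos h, if_neg (asymm h), if_neg (ne_of_gt h), add_zero]
  · subst h; simp
  · rw [if_neg (asymm h), if_pos h, if_neg (ne_of_lt h), zero_add]

lemma L3 (p : Fin n × Fin n) :
    ∑ i, fup f (Sum.inl (Sum.inl i)) (Sum.inl (Sum.inr p)) = tt f p := by
  unfold tt
  by_cases h : p.1 < p.2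
  · rw [if_pos h]
    have e : ∀ i, fup f (Sum.inl (Sum.inl i)) (Sum.inl (Sum.inr p))
        = (if i = p.1 then f0 f p.1 p.2 else 0) + (if i = p.2 then f0 f p.2 p.1 else 0) := by
      intro i; simp only [fup, if_pos h]
    rw [Finset.sum_congr rfl fun i _ => e i, Finset.sum_add_distrib,
      Finset.sum_ite_eq', Finset.sum_ite_eq']
    simp
  · rw [if_neg h]
    apply Finset.sum_eq_zero
    intro i _
    simp only [fup, if_neg h]

lemma L4 (p : Fin n × Fin n) :
    ∑ k, fup f (Sum.inr (Sum.inr p)) (Sum.inr (Sum.inl k)) = tt f p := by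
  unfold tt
  by_cases h : p.1 < p.2
  · rw [if_pos h]
    have e : ∀ k, fup f (Sum.inr (Sum.inr p)) (Sum.inr (Sum.inl k))
        = (if k = p.2 then f0 f p.1 p.2 else 0) + (if k = p.1 then f0 f p.2 p.1 else 0) := by
      intro k; simp only [fup, if_pos h]
    rw [Finset.sum_congr rfl fun k _ => e k, Finset.sum_add_distrib,
      Finset.sum_ite_eq', Finset.sum_ite_eq']
    simp
  · rw [if_neg h]
    apply Finset.sum_eq_zero
    intro k _
    simp only [fup, if_neg h]

lemma L5 (p : Fin n × Fin n) :
    ∑ q : Fin n × Fin n, fup f (Sum.inl (Sum.inr p)) (Sum.inr (Sum.inr q)) = tt f p := by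
  simp only [fup]
  rw [Finset.sum_ite_eq]
  simp

end Up2

end SubdivAux
namespace SubdivAux

section Up3

open Finset

variable {n : ℕ} {DL DR B : Fin n → Fin n → Prop} {S T : Finset (Fin n)} {r : ℕ}
variable (F : UnitFlow (flowEdgesLR DL DR B) (S.image Sum.inl) (T.image Sum.inr) r)

lemma out_ll (i : Fin n) :
    ∑ u, fup F.f (Sum.inl (Sum.inl i)) u = ∑ u, F.f (Sum.inl i) u := by
  rw [sum_V2, Fintype.sum_sum_type, L1]
  have e1 : ∑ j, fup F.f (Sum.inl (Sum.inl i)) (Sum.inl (Sum.inl j))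
      = ∑ j, F.f (Sum.inl i) (Sum.inl j) := rfl
  have e3 : ∑ k, fup F.f (Sum.inl (Sum.inl i)) (Sum.inr (Sum.inl k)) = f0 F.f i i := by
    simp [fup]
  have e4 : ∑ q : Fin n × Fin n, fup F.f (Sum.inl (Sum.inl i)) (Sum.inr (Sum.inr q)) = 0 := by
    simp [fup]
  have e5 : ∑ k, F.f (Sum.inl i) (Sum.inr k) = ∑ k, bb F.f i k := rfl
  have hrow := f0_row F i
  rw [e1, e3, e4, e5]
  omega

lemma in_ll (j : Fin n) :
    ∑ u, fup F.f u (Sum.inl (Sum.inl j)) = ∑ u, F.f u (Sum.inl j) := by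
  rw [sum_V2, Fintype.sum_sum_type]
  have e1 : ∑ i, fup F.f (Sum.inl (Sum.inl i)) (Sum.inl (Sum.inl j))
      = ∑ i, F.f (Sum.inl i) (Sum.inl j) := rfl
  have e2 : ∑ p : Fin n × Fin n, fup F.f (Sum.inl (Sum.inr p)) (Sum.inl (Sum.inl j)) = 0 := by
    simp [fup]
  have e3 : ∑ i, fup F.f (Sum.inr (Sum.inl i)) (Sum.inl (Sum.inl j)) = 0 := by
    simp [fup]
  have e4 : ∑ p : Fin n × Fin n, fup F.f (Sum.inr (Sum.inr p)) (Sum.inl (Sum.inl j)) = 0 := by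
    simp [fup]
  have e5 : ∑ i, F.f (Sum.inr i) (Sum.inl j) = 0 := by
    apply Finset.sum_eq_zero
    intro i _
    exact flow_zero F (by simp [flowEdgesLR])
  rw [e1, e2, e3, e4, e5]

lemma in_rl (k : Fin n) :
    ∑ u, fup F.f u (Sum.inr (Sum.inl k)) = ∑ u, F.f u (Sum.inr k) := by
  rw [sum_V2, Fintype.sum_sum_type, L2]
  have e1 : ∑ i, fup F.f (Sum.inl (Sum.inl i)) (Sum.inr (Sum.inl k)) = f0 F.f k k := by
    simp [fup]
  have e2 : ∑ p : Fin n × Fin n, fup F.f (Sum.inl (Sum.inr p)) (Sum.inr (Sum.inl k)) = 0 := by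
    simp [fup]
  have e3 : ∑ i, fup F.f (Sum.inr (Sum.inl i)) (Sum.inr (Sum.inl k))
      = ∑ i, F.f (Sum.inr i) (Sum.inr k) := rfl
  have e4 : ∑ i, F.f (Sum.inl i) (Sum.inr k) = ∑ i, bb F.f i k := rfl
  have hcol := f0_col F k
  rw [e1, e2, e3, e4]
  omega

lemma out_rl (j : Fin n) :
    ∑ u, fup F.f (Sum.inr (Sum.inl j)) u = ∑ u, F.f (Sum.inr j) u := by
  rw [sum_V2, Fintype.sum_sum_type]
  have e1 : ∑ i, fup F.f (Sum.inr (Sum.inl j)) (Sum.inl (Sum.inl i)) = 0 := by simp [fup]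
  have e2 : ∑ p : Fin n × Fin n, fup F.f (Sum.inr (Sum.inl j)) (Sum.inl (Sum.inr p)) = 0 := by
    simp [fup]
  have e3 : ∑ k, fup F.f (Sum.inr (Sum.inl j)) (Sum.inr (Sum.inl k))
      = ∑ k, F.f (Sum.inr j) (Sum.inr k) := rfl
  have e4 : ∑ q : Fin n × Fin n, fup F.f (Sum.inr (Sum.inl j)) (Sum.inr (Sum.inr q)) = 0 := by
    simp [fup]
  have e5 : ∑ i, F.f (Sum.inr j) (Sum.inl i) = 0 := by
    apply Finset.sum_eq_zero
    intro i _
    exact flow_zero F (by simp [flowEdgesLR])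
  rw [e1, e2, e3, e4, e5]
  omega

lemma in_lp (p : Fin n × Fin n) :
    ∑ u, fup F.f u (Sum.inl (Sum.inr p)) = tt F.f p := by
  rw [sum_V2, L3]
  have e2 : ∑ q : Fin n × Fin n, fup F.f (Sum.inl (Sum.inr q)) (Sum.inl (Sum.inr p)) = 0 := by
    simp [fup]
  have e3 : ∑ i, fup F.f (Sum.inr (Sum.inl i)) (Sum.inl (Sum.inr p)) = 0 := by simp [fup]
  have e4 : ∑ q : Fin n × Fin n, fup F.f (Sum.inr (Sum.inr q)) (Sum.inl (Sum.inr p)) = 0 := by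
    simp [fup]
  rw [e2, e3, e4]
  omega

lemma out_lp (p : Fin n × Fin n) :
    ∑ u, fup F.f (Sum.inl (Sum.inr p)) u = tt F.f p := by
  rw [sum_V2, L5]
  have e1 : ∑ i, fup F.f (Sum.inl (Sum.inr p)) (Sum.inl (Sum.inl i)) = 0 := by simp [fup]
  have e2 : ∑ q : Fin n × Fin n, fup F.f (Sum.inl (Sum.inr p)) (Sum.inl (Sum.inr q)) = 0 := by
    simp [fup]
  have e3 : ∑ i, fup F.f (Sum.inl (Sum.inr p)) (Sum.inr (Sum.inl i)) = 0 := by simp [fup]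
  rw [e1, e2, e3]
  omega

lemma in_rp (p : Fin n × Fin n) :
    ∑ u, fup F.f u (Sum.inr (Sum.inr p)) = tt F.f p := by
  rw [sum_V2]
  have e1 : ∑ i, fup F.f (Sum.inl (Sum.inl i)) (Sum.inr (Sum.inr p)) = 0 := by simp [fup]
  have e2 : ∑ q : Fin n × Fin n, fup F.f (Sum.inl (Sum.inr q)) (Sum.inr (Sum.inr p))
      = tt F.f p := by
    simp [fup]
  have e3 : ∑ i, fup F.f (Sum.inr (Sum.inl i)) (Sum.inr (Sum.inr p)) = 0 := by simp [fup]
  have e4 : ∑ q : Fin n × Fin n, fup F.f (Sum.inr (Sum.inr q)) (Sum.inr (Sum.inr p)) = 0 := by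
    simp [fup]
  rw [e1, e2, e3, e4]
  omega

lemma out_rp (p : Fin n × Fin n) :
    ∑ u, fup F.f (Sum.inr (Sum.inr p)) u = tt F.f p := by
  rw [sum_V2, L4]
  have e1 : ∑ i, fup F.f (Sum.inr (Sum.inr p)) (Sum.inl (Sum.inl i)) = 0 := by simp [fup]
  have e2 : ∑ q : Fin n × Fin n, fup F.f (Sum.inr (Sum.inr p)) (Sum.inl (Sum.inr q)) = 0 := by
    simp [fup]
  have e4 : ∑ q : Fin n × Fin n, fup F.f (Sum.inr (Sum.inr p)) (Sum.inr (Sum.inr q)) = 0 := by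
    simp [fup]
  rw [e1, e2, e4]
  omega

end Up3

end SubdivAux
namespace SubdivAux

section Up4

open Finset

variable {n : ℕ} {DL DR B : Fin n → Fin n → Prop} {S T : Finset (Fin n)} {r : ℕ}

/-- Lifting a unit flow on the original network to the subdivided network. -/
def upFlow (hB : ∀ i j, B i j → B j i)
    (F : UnitFlow (flowEdgesLR DL DR B) (S.image Sum.inl) (T.image Sum.inr) r) :
    UnitFlow (flowEdgesLR (subdivideEdges DL B) (subdivideEdges DR B) (fun _ _ => False))
      (S.image fun i => Sum.inl (Sum.inl i)) (T.image fun t => Sum.inr (Sum.inl t)) r where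
  f := fup F.f
  supp := by
    rintro ((i | p) | (i | p)) ((j | q) | (j | q)) h <;>
      simp only [fup] at h
    · -- ll ll : DL edge
      exact F.supp _ _ h
    · -- ll lp
      by_cases hlt : q.1 < q.2
      · rw [if_pos hlt] at h
        refine ⟨?_, hlt, ?_⟩
        · by_cases h1 : i = q.1
          · have h2 : f0 F.f q.1 q.2 ≠ 0 := by
              by_contra hz
              simp [h1, hz] at h
              rcases h with ⟨h3, h4⟩
              exact absurd (h3 ▸ hlt) (by simp [h1])
            exact f0_supp F (ne_of_lt hlt) h2
          · rw [if_neg h1, zero_add] at h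
            by_cases h2 : i = q.2
            · rw [if_pos h2] at h
              exact hB _ _ (f0_supp F (ne_of_gt hlt) h)
            · rw [if_neg h2] at h; exact absurd rfl h
        · by_cases h1 : i = q.1
          · exact Or.inl h1
          · rw [if_neg h1, zero_add] at h
            by_cases h2 : i = q.2
            · exact Or.inr h2
            · rw [if_neg h2] at h; exact absurd rfl h
      · rw [if_neg hlt] at h; exact absurd rfl h
    · -- ll rl : diagonal
      by_cases h1 : i = j
      · exact Or.inl (by rw [h1])
      · rw [if_neg h1] at h; exact absurd rfl h
    · -- ll rp : impossible
      exact absurd rfl h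
    · exact absurd rfl h
    · exact absurd rfl h
    · exact absurd rfl h
    · -- lp rq : diagonal
      by_cases h1 : p = q
      · exact Or.inl (by rw [h1])
      · rw [if_neg h1] at h; exact absurd rfl h
    · exact absurd rfl h
    · exact absurd rfl h
    · -- rl rl : DR edge
      exact F.supp _ _ h
    · exact absurd rfl h
    · exact absurd rfl h
    · exact absurd rfl h
    · -- rp rl
      by_cases hlt : p.1 < p.2
      · rw [if_pos hlt] at h
        refine ⟨?_, hlt, ?_⟩
        · by_cases h1 : j = p.2
          · have h2 : f0 F.f p.1 p.2 ≠ 0 := by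
              by_contra hz
              simp [h1, hz] at h
              rcases h with ⟨h3, h4⟩
              exact absurd (h3 ▸ hlt) (by simp [h1])
            exact f0_supp F (ne_of_lt hlt) h2
          · rw [if_neg h1, zero_add] at h
            by_cases h2 : j = p.1
            · rw [if_pos h2] at h
              exact hB _ _ (f0_supp F (ne_of_gt hlt) h)
            · rw [if_neg h2] at h; exact absurd rfl h
        · by_cases h1 : j = p.2
          · exact Or.inr h1
          · rw [if_neg h1, zero_add] at h
            by_cases h2 : j = p.1
            · exact Or.inl h2
            · rw [if_neg h2] at h; exact absurd rfl h
      · rw [if_neg hlt] at h; exact absurd rfl h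
    · exact absurd rfl h
  edge_cap := by
    rintro ((i | p) | (i | p)) ((j | q) | (j | q)) <;> simp only [fup]
    · exact F.edge_cap _ _
    · by_cases hlt : q.1 < q.2
      · rw [if_pos hlt]
        by_cases h1 : i = q.1
        · have h2 : i ≠ q.2 := fun hh => absurd (h1 ▸ hh ▸ hlt) (lt_irrefl _)
          rw [if_pos h1, if_neg h2, add_zero]
          exact f0_le_one F _ _
        · rw [if_neg h1, zero_add]
          split
          · exact f0_le_one F _ _
          · exact Nat.zero_le 1
      · rw [if_neg hlt]; exact Nat.zero_le 1
    · split
      · exact f0_le_one F _ _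
      · exact Nat.zero_le 1
    · exact Nat.zero_le 1
    · exact Nat.zero_le 1
    · exact Nat.zero_le 1
    · exact Nat.zero_le 1
    · split
      · exact tt_le_one F _
      · exact Nat.zero_le 1
    · exact Nat.zero_le 1
    · exact Nat.zero_le 1
    · exact F.edge_cap _ _
    · exact Nat.zero_le 1
    · exact Nat.zero_le 1
    · exact Nat.zero_le 1
    · by_cases hlt : p.1 < p.2
      · rw [if_pos hlt]
        by_cases h1 : j = p.2
        · have h2 : j ≠ p.1 := fun hh => absurd (h1 ▸ hh ▸ hlt) (lt_irrefl _)
          rw [if_pos h1, if_neg h2, add_zero]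
          exact f0_le_one F _ _
        · rw [if_neg h1, zero_add]
          split
          · exact f0_le_one F _ _
          · exact Nat.zero_le 1
      · rw [if_neg hlt]; exact Nat.zero_le 1
    · exact Nat.zero_le 1
  vert_cap_in := by
    rintro ((j | p) | (k | p))
    · rw [in_ll F]; exact F.vert_cap_in _
    · rw [in_lp F]; exact tt_le_one F p
    · rw [in_rl F]; exact F.vert_cap_in _
    · rw [in_rp F]; exact tt_le_one F p
  vert_cap_out := by
    rintro ((j | p) | (k | p))
    · rw [out_ll F]; exact F.vert_cap_out _
    · rw [out_lp F]; exact tt_le_one F p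
    · rw [out_rl F]; exact F.vert_cap_out _
    · rw [out_rp F]; exact tt_le_one F p
  no_into_src := by
    intro s hs
    rw [Finset.mem_image] at hs
    obtain ⟨s0, hs0, rfl⟩ := hs
    rw [in_ll F]
    exact F.no_into_src _ (Finset.mem_image_of_mem _ hs0)
  no_outof_tgt := by
    intro t ht
    rw [Finset.mem_image] at ht
    obtain ⟨t0, ht0, rfl⟩ := ht
    rw [out_rl F]
    exact F.no_outof_tgt _ (Finset.mem_image_of_mem _ ht0)
  conserve := by
    rintro ((j | p) | (k | p)) hvS hvT
    · rw [in_ll F, out_ll F]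
      apply F.conserve
      · intro hmem
        rw [Finset.mem_image] at hmem
        obtain ⟨x, hx, hx2⟩ := hmem
        apply hvS
        rw [Finset.mem_image]
        exact ⟨x, hx, by rw [Sum.inl.injEq] at hx2; rw [hx2]⟩
      · intro hmem
        rw [Finset.mem_image] at hmem
        obtain ⟨x, _, hx2⟩ := hmem
        cases hx2
    · rw [in_lp F, out_lp F]
    · rw [in_rl F, out_rl F]
      apply F.conserve
      · intro hmem
        rw [Finset.mem_image] at hmem
        obtain ⟨x, _, hx2⟩ := hmem
        cases hx2
      · intro hmem
        rw [Finset.mem_image] at hmem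
        obtain ⟨x, hx, hx2⟩ := hmem
        apply hvT
        rw [Finset.mem_image]
        exact ⟨x, hx, by rw [Sum.inr.injEq] at hx2; rw [hx2]⟩
    · rw [in_rp F, out_rp F]
  value := by
    rw [Finset.sum_image (by intro x _ y _ h; simpa using h)]
    have e : ∀ s ∈ S, ∑ u, fup F.f (Sum.inl (Sum.inl s)) u = ∑ u, F.f (Sum.inl s) u :=
      fun s _ => out_ll F s
    rw [Finset.sum_congr rfl e]
    have := F.value
    rw [Finset.sum_image (by intro x _ y _ h; simpa using h)] at this
    exact this

end Up4

end SubdivAux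
namespace SubdivAux

section Down

open Finset

variable {n : ℕ}

/-- flow through subdivision vertices from `i` to `k'` -/
def g1 (f' : ((Fin n ⊕ (Fin n × Fin n)) ⊕ (Fin n ⊕ (Fin n × Fin n))) →
    ((Fin n ⊕ (Fin n × Fin n)) ⊕ (Fin n ⊕ (Fin n × Fin n))) → ℕ) (i k : Fin n) : ℕ :=
  ∑ p : Fin n × Fin n,
    f' (Sum.inl (Sum.inl i)) (Sum.inl (Sum.inr p)) * f' (Sum.inr (Sum.inr p)) (Sum.inr (Sum.inl k))

/-- Projecting a flow on the subdivided network down to the original network. -/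
def fdown (f' : ((Fin n ⊕ (Fin n × Fin n)) ⊕ (Fin n ⊕ (Fin n × Fin n))) →
    ((Fin n ⊕ (Fin n × Fin n)) ⊕ (Fin n ⊕ (Fin n × Fin n))) → ℕ) :
    (Fin n ⊕ Fin n) → (Fin n ⊕ Fin n) → ℕ
  | Sum.inl i, Sum.inl j => f' (Sum.inl (Sum.inl i)) (Sum.inl (Sum.inl j))
  | Sum.inl i, Sum.inr k => f' (Sum.inl (Sum.inl i)) (Sum.inr (Sum.inl k)) + g1 f' i k
  | Sum.inr i, Sum.inr j => f' (Sum.inr (Sum.inl i)) (Sum.inr (Sum.inl j))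
  | Sum.inr _, Sum.inl _ => 0

variable {DL DR B : Fin n → Fin n → Prop} {S T : Finset (Fin n)} {r : ℕ}
variable (F : UnitFlow
    (flowEdgesLR (subdivideEdges DL B) (subdivideEdges DR B) (fun _ _ => False))
    (S.image fun i => Sum.inl (Sum.inl i)) (T.image fun t => Sum.inr (Sum.inl t)) r)

/-- flow through the diagonal edge at subdivision vertex `p` -/
def dd (p : Fin n × Fin n) : ℕ := F.f (Sum.inl (Sum.inr p)) (Sum.inr (Sum.inr p))

lemma z_lp_ll (p : Fin n × Fin n) (i : Fin n) :
    F.f (Sum.inl (Sum.inr p)) (Sum.inl (Sum.inl i)) = 0 :=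
  flow_zero F (by simp [flowEdgesLR, subdivideEdges])

lemma z_lp_lp (p q : Fin n × Fin n) :
    F.f (Sum.inl (Sum.inr p)) (Sum.inl (Sum.inr q)) = 0 :=
  flow_zero F (by simp [flowEdgesLR, subdivideEdges])

lemma z_lp_rl (p : Fin n × Fin n) (k : Fin n) :
    F.f (Sum.inl (Sum.inr p)) (Sum.inr (Sum.inl k)) = 0 :=
  flow_zero F (by simp [flowEdgesLR])

lemma z_lp_rp {p q : Fin n × Fin n} (h : p ≠ q) :
    F.f (Sum.inl (Sum.inr p)) (Sum.inr (Sum.inr q)) = 0 :=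
  flow_zero F (by simp [flowEdgesLR, h])

lemma z_ll_rp (i : Fin n) (q : Fin n × Fin n) :
    F.f (Sum.inl (Sum.inl i)) (Sum.inr (Sum.inr q)) = 0 :=
  flow_zero F (by simp [flowEdgesLR])

lemma z_rl_ll (i : Fin n) (w : Fin n ⊕ (Fin n × Fin n)) :
    F.f (Sum.inr (Sum.inl i)) (Sum.inl w) = 0 :=
  flow_zero F (by simp [flowEdgesLR])

lemma z_rl_rp (i : Fin n) (q : Fin n × Fin n) :
    F.f (Sum.inr (Sum.inl i)) (Sum.inr (Sum.inr q)) = 0 :=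
  flow_zero F (by simp [flowEdgesLR, subdivideEdges])

lemma z_rp_l (p : Fin n × Fin n) (w : Fin n ⊕ (Fin n × Fin n)) :
    F.f (Sum.inr (Sum.inr p)) (Sum.inl w) = 0 :=
  flow_zero F (by simp [flowEdgesLR])

lemma z_rp_rp (p q : Fin n × Fin n) :
    F.f (Sum.inr (Sum.inr p)) (Sum.inr (Sum.inr q)) = 0 :=
  flow_zero F (by simp [flowEdgesLR, subdivideEdges])

lemma out_lp' (p : Fin n × Fin n) : ∑ u, F.f (Sum.inl (Sum.inr p)) u = dd F p := by
  rw [sum_V2]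
  have e1 : ∑ i, F.f (Sum.inl (Sum.inr p)) (Sum.inl (Sum.inl i)) = 0 :=
    Finset.sum_eq_zero fun i _ => z_lp_ll F p i
  have e2 : ∑ q : Fin n × Fin n, F.f (Sum.inl (Sum.inr p)) (Sum.inl (Sum.inr q)) = 0 :=
    Finset.sum_eq_zero fun q _ => z_lp_lp F p q
  have e3 : ∑ i, F.f (Sum.inl (Sum.inr p)) (Sum.inr (Sum.inl i)) = 0 :=
    Finset.sum_eq_zero fun i _ => z_lp_rl F p i
  have e4 : ∑ q : Fin n × Fin n, F.f (Sum.inl (Sum.inr p)) (Sum.inr (Sum.inr q)) = dd F p := by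
    rw [Finset.sum_eq_single p]
    · rfl
    · intro q _ hq; exact z_lp_rp F (Ne.symm hq)
    · intro hq; exact absurd (Finset.mem_univ p) hq
  rw [e1, e2, e3, e4]
  omega

lemma in_rp' (p : Fin n × Fin n) : ∑ u, F.f u (Sum.inr (Sum.inr p)) = dd F p := by
  rw [sum_V2]
  have e1 : ∑ i, F.f (Sum.inl (Sum.inl i)) (Sum.inr (Sum.inr p)) = 0 :=
    Finset.sum_eq_zero fun i _ => z_ll_rp F i p
  have e2 : ∑ q : Fin n × Fin n, F.f (Sum.inl (Sum.inr q)) (Sum.inr (Sum.inr p)) = dd F p := by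
    rw [Finset.sum_eq_single p]
    · rfl
    · intro q _ hq; exact z_lp_rp F hq
    · intro hq; exact absurd (Finset.mem_univ p) hq
  have e3 : ∑ i, F.f (Sum.inr (Sum.inl i)) (Sum.inr (Sum.inr p)) = 0 :=
    Finset.sum_eq_zero fun i _ => z_rl_rp F i p
  have e4 : ∑ q : Fin n × Fin n, F.f (Sum.inr (Sum.inr q)) (Sum.inr (Sum.inr p)) = 0 :=
    Finset.sum_eq_zero fun q _ => z_rp_rp F q p
  rw [e1, e2, e3, e4]
  omega

lemma lp_not_src (p : Fin n × Fin n) :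
    (Sum.inl (Sum.inr p) : (Fin n ⊕ (Fin n × Fin n)) ⊕ (Fin n ⊕ (Fin n × Fin n))) ∉ S.image (fun i => Sum.inl (Sum.inl i)) := by
  simp

lemma lp_not_tgt (p : Fin n × Fin n) :
    (Sum.inl (Sum.inr p) : (Fin n ⊕ (Fin n × Fin n)) ⊕ (Fin n ⊕ (Fin n × Fin n))) ∉ T.image (fun t => Sum.inr (Sum.inl t)) := by
  simp

lemma rp_not_src (p : Fin n × Fin n) :
    (Sum.inr (Sum.inr p) : (Fin n ⊕ (Fin n × Fin n)) ⊕ (Fin n ⊕ (Fin n × Fin n))) ∉ S.image (fun i => Sum.inl (Sum.inl i)) := by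
  simp

lemma rp_not_tgt (p : Fin n × Fin n) :
    (Sum.inr (Sum.inr p) : (Fin n ⊕ (Fin n × Fin n)) ⊕ (Fin n ⊕ (Fin n × Fin n))) ∉ T.image (fun t => Sum.inr (Sum.inl t)) := by
  simp

lemma in_lp_eq (p : Fin n × Fin n) :
    ∑ i, F.f (Sum.inl (Sum.inl i)) (Sum.inl (Sum.inr p)) = dd F p := by
  have hc := F.conserve (Sum.inl (Sum.inr p)) (lp_not_src (S := S) p) (lp_not_tgt (T := T) p)
  rw [out_lp' F] at hc
  rw [sum_V2] at hc
  have e2 : ∑ q : Fin n × Fin n, F.f (Sum.inl (Sum.inr q)) (Sum.inl (Sum.inr p)) = 0 :=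
    Finset.sum_eq_zero fun q _ => z_lp_lp F q p
  have e3 : ∑ i, F.f (Sum.inr (Sum.inl i)) (Sum.inl (Sum.inr p)) = 0 :=
    Finset.sum_eq_zero fun i _ => z_rl_ll F i (Sum.inr p)
  have e4 : ∑ q : Fin n × Fin n, F.f (Sum.inr (Sum.inr q)) (Sum.inl (Sum.inr p)) = 0 :=
    Finset.sum_eq_zero fun q _ => z_rp_l F q (Sum.inr p)
  rw [e2, e3, e4] at hc
  omega

lemma out_rp_eq (p : Fin n × Fin n) :
    ∑ k, F.f (Sum.inr (Sum.inr p)) (Sum.inr (Sum.inl k)) = dd F p := by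
  have hc := F.conserve (Sum.inr (Sum.inr p)) (rp_not_src (S := S) p) (rp_not_tgt (T := T) p)
  rw [in_rp' F] at hc
  rw [sum_V2] at hc
  have e1 : ∑ i, F.f (Sum.inr (Sum.inr p)) (Sum.inl (Sum.inl i)) = 0 :=
    Finset.sum_eq_zero fun i _ => z_rp_l F p (Sum.inl i)
  have e2 : ∑ q : Fin n × Fin n, F.f (Sum.inr (Sum.inr p)) (Sum.inl (Sum.inr q)) = 0 :=
    Finset.sum_eq_zero fun q _ => z_rp_l F p (Sum.inr q)
  have e4 : ∑ q : Fin n × Fin n, F.f (Sum.inr (Sum.inr p)) (Sum.inr (Sum.inr q)) = 0 :=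
    Finset.sum_eq_zero fun q _ => z_rp_rp F p q
  rw [e1, e2, e4] at hc
  omega

lemma dd_le_one (p : Fin n × Fin n) : dd F p ≤ 1 := F.edge_cap _ _

lemma key1 (i : Fin n) :
    ∑ k, g1 F.f i k = ∑ p : Fin n × Fin n, F.f (Sum.inl (Sum.inl i)) (Sum.inl (Sum.inr p)) := by
  unfold g1
  rw [Finset.sum_comm]
  apply Finset.sum_congr rfl
  intro p _
  rw [← Finset.mul_sum, out_rp_eq F]
  refine natmul_eq ?_ (dd_le_one F p)
  rw [← in_lp_eq F]
  exact Finset.single_le_sum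
    (f := fun i' => F.f (Sum.inl (Sum.inl i')) (Sum.inl (Sum.inr p)))
    (fun _ _ => Nat.zero_le _) (Finset.mem_univ i)

lemma key2 (k : Fin n) :
    ∑ i, g1 F.f i k = ∑ p : Fin n × Fin n, F.f (Sum.inr (Sum.inr p)) (Sum.inr (Sum.inl k)) := by
  unfold g1
  rw [Finset.sum_comm]
  apply Finset.sum_congr rfl
  intro p _
  rw [← Finset.sum_mul, in_lp_eq F]
  refine natmul_eq' ?_ (dd_le_one F p)
  rw [← out_rp_eq F]
  exact Finset.single_le_sum
    (f := fun k' => F.f (Sum.inr (Sum.inr p)) (Sum.inr (Sum.inl k')))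
    (fun _ _ => Nat.zero_le _) (Finset.mem_univ k)

lemma down_out_inl (i : Fin n) :
    ∑ u, fdown F.f (Sum.inl i) u = ∑ u, F.f (Sum.inl (Sum.inl i)) u := by
  rw [Fintype.sum_sum_type, sum_V2]
  have e1 : ∑ j, fdown F.f (Sum.inl i) (Sum.inl j)
      = ∑ j, F.f (Sum.inl (Sum.inl i)) (Sum.inl (Sum.inl j)) := rfl
  have e2 : ∑ k, fdown F.f (Sum.inl i) (Sum.inr k)
      = ∑ k, F.f (Sum.inl (Sum.inl i)) (Sum.inr (Sum.inl k)) + ∑ k, g1 F.f i k := by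
    simp only [fdown]
    rw [Finset.sum_add_distrib]
  have e4 : ∑ q : Fin n × Fin n, F.f (Sum.inl (Sum.inl i)) (Sum.inr (Sum.inr q)) = 0 :=
    Finset.sum_eq_zero fun q _ => z_ll_rp F i q
  rw [e1, e2, e4, key1 F]
  omega

lemma down_in_inl (j : Fin n) :
    ∑ u, fdown F.f u (Sum.inl j) = ∑ u, F.f u (Sum.inl (Sum.inl j)) := by
  rw [Fintype.sum_sum_type, sum_V2]
  have e1 : ∑ i, fdown F.f (Sum.inl i) (Sum.inl j)
      = ∑ i, F.f (Sum.inl (Sum.inl i)) (Sum.inl (Sum.inl j)) := rfl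
  have e2 : ∑ i, fdown F.f (Sum.inr i) (Sum.inl j) = 0 :=
    Finset.sum_eq_zero fun i _ => rfl
  have e3 : ∑ q : Fin n × Fin n, F.f (Sum.inl (Sum.inr q)) (Sum.inl (Sum.inl j)) = 0 :=
    Finset.sum_eq_zero fun q _ => z_lp_ll F q j
  have e4 : ∑ i, F.f (Sum.inr (Sum.inl i)) (Sum.inl (Sum.inl j)) = 0 :=
    Finset.sum_eq_zero fun i _ => z_rl_ll F i (Sum.inl j)
  have e5 : ∑ q : Fin n × Fin n, F.f (Sum.inr (Sum.inr q)) (Sum.inl (Sum.inl j)) = 0 :=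
    Finset.sum_eq_zero fun q _ => z_rp_l F q (Sum.inl j)
  rw [e1, e2, e3, e4, e5]

lemma down_in_inr (k : Fin n) :
    ∑ u, fdown F.f u (Sum.inr k) = ∑ u, F.f u (Sum.inr (Sum.inl k)) := by
  rw [Fintype.sum_sum_type, sum_V2]
  have e1 : ∑ i, fdown F.f (Sum.inl i) (Sum.inr k)
      = ∑ i, F.f (Sum.inl (Sum.inl i)) (Sum.inr (Sum.inl k)) + ∑ i, g1 F.f i k := by
    simp only [fdown]
    rw [Finset.sum_add_distrib]
  have e2 : ∑ j, fdown F.f (Sum.inr j) (Sum.inr k)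
      = ∑ j, F.f (Sum.inr (Sum.inl j)) (Sum.inr (Sum.inl k)) := rfl
  have e3 : ∑ q : Fin n × Fin n, F.f (Sum.inl (Sum.inr q)) (Sum.inr (Sum.inl k)) = 0 :=
    Finset.sum_eq_zero fun q _ => z_lp_rl F q k
  rw [e1, e2, e3, key2 F]
  omega

lemma down_out_inr (j : Fin n) :
    ∑ u, fdown F.f (Sum.inr j) u = ∑ u, F.f (Sum.inr (Sum.inl j)) u := by
  rw [Fintype.sum_sum_type, sum_V2]
  have e1 : ∑ i, fdown F.f (Sum.inr j) (Sum.inl i) = 0 :=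
    Finset.sum_eq_zero fun i _ => rfl
  have e2 : ∑ k, fdown F.f (Sum.inr j) (Sum.inr k)
      = ∑ k, F.f (Sum.inr (Sum.inl j)) (Sum.inr (Sum.inl k)) := rfl
  have e3 : ∑ i, F.f (Sum.inr (Sum.inl j)) (Sum.inl (Sum.inl i)) = 0 :=
    Finset.sum_eq_zero fun i _ => z_rl_ll F j (Sum.inl i)
  have e4 : ∑ q : Fin n × Fin n, F.f (Sum.inr (Sum.inl j)) (Sum.inl (Sum.inr q)) = 0 :=
    Finset.sum_eq_zero fun q _ => z_rl_ll F j (Sum.inr q)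
  have e5 : ∑ q : Fin n × Fin n, F.f (Sum.inr (Sum.inl j)) (Sum.inr (Sum.inr q)) = 0 :=
    Finset.sum_eq_zero fun q _ => z_rl_rp F j q
  rw [e1, e2, e3, e4, e5]
  omega

end Down

end SubdivAux
namespace SubdivAux

section Down2

open Finset

variable {n : ℕ} {DL DR B : Fin n → Fin n → Prop} {S T : Finset (Fin n)} {r : ℕ}

/-- Projecting a unit flow on the subdivided network down to the original network. -/
def downFlow (hB : ∀ i j, B i j → B j i)
    (F : UnitFlow
      (flowEdgesLR (subdivideEdges DL B) (subdivideEdges DR B) (fun _ _ => False))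
      (S.image fun i => Sum.inl (Sum.inl i)) (T.image fun t => Sum.inr (Sum.inl t)) r) :
    UnitFlow (flowEdgesLR DL DR B) (S.image Sum.inl) (T.image Sum.inr) r where
  f := fdown F.f
  supp := by
    rintro (i | i) (j | j) h <;> simp only [fdown] at h
    · exact F.supp _ _ h
    · -- inl i → inr j : show i = j ∨ B i j
      by_cases h1 : F.f (Sum.inl (Sum.inl i)) (Sum.inr (Sum.inl j)) ≠ 0
      · have := F.supp _ _ h1
        simp only [flowEdgesLR] at this
        rcases this with h2 | h2
        · exact Or.inl (by injection h2)
        · exact absurd h2 id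
      · push_neg at h1
        rw [h1, zero_add] at h
        obtain ⟨p, _, hp⟩ := Finset.exists_ne_zero_of_sum_ne_zero h
        have hfac1 : F.f (Sum.inl (Sum.inl i)) (Sum.inl (Sum.inr p)) ≠ 0 :=
          fun hz => hp (by rw [hz, zero_mul])
        have hfac2 : F.f (Sum.inr (Sum.inr p)) (Sum.inr (Sum.inl j)) ≠ 0 :=
          fun hz => hp (by rw [hz, mul_zero])
        have c1 := F.supp _ _ hfac1
        have c2 := F.supp _ _ hfac2
        simp only [flowEdgesLR, subdivideEdges] at c1 c2
        obtain ⟨hb1, _, hi⟩ := c1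
        obtain ⟨hb2, _, hj⟩ := c2
        rcases hi with hi | hi <;> rcases hj with hj | hj
        · exact Or.inl (hi.trans hj.symm)
        · exact Or.inr (by rw [hi, hj]; exact hb1)
        · exact Or.inr (by rw [hi, hj]; exact hB _ _ hb1)
        · exact Or.inl (hi.trans hj.symm)
    · exact absurd rfl h
    · exact F.supp _ _ h
  edge_cap := by
    rintro (i | i) (j | j) <;> simp only [fdown]
    · exact F.edge_cap _ _
    · have h1 : g1 F.f i j ≤ ∑ p : Fin n × Fin n, F.f (Sum.inl (Sum.inl i)) (Sum.inl (Sum.inr p)) := by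
        apply Finset.sum_le_sum
        intro p _
        calc F.f (Sum.inl (Sum.inl i)) (Sum.inl (Sum.inr p))
              * F.f (Sum.inr (Sum.inr p)) (Sum.inr (Sum.inl j))
            ≤ F.f (Sum.inl (Sum.inl i)) (Sum.inl (Sum.inr p)) * 1 :=
              mul_le_mul_right (F.edge_cap _ _) _
          _ = _ := mul_one _
      have h2 := F.vert_cap_out (Sum.inl (Sum.inl i))
      rw [sum_V2] at h2
      have h3 : F.f (Sum.inl (Sum.inl i)) (Sum.inr (Sum.inl j))
          ≤ ∑ k, F.f (Sum.inl (Sum.inl i)) (Sum.inr (Sum.inl k)) :=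
        Finset.single_le_sum
          (f := fun k => F.f (Sum.inl (Sum.inl i)) (Sum.inr (Sum.inl k)))
          (fun _ _ => Nat.zero_le _) (Finset.mem_univ j)
      omega
    · exact Nat.zero_le 1
    · exact F.edge_cap _ _
  vert_cap_in := by
    rintro (j | k)
    · rw [down_in_inl F]; exact F.vert_cap_in _
    · rw [down_in_inr F]; exact F.vert_cap_in _
  vert_cap_out := by
    rintro (i | j)
    · rw [down_out_inl F]; exact F.vert_cap_out _
    · rw [down_out_inr F]; exact F.vert_cap_out _
  no_into_src := by
    intro s hs
    rw [Finset.mem_image] at hs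
    obtain ⟨s0, hs0, rfl⟩ := hs
    rw [down_in_inl F]
    exact F.no_into_src _ (Finset.mem_image_of_mem _ hs0)
  no_outof_tgt := by
    intro t ht
    rw [Finset.mem_image] at ht
    obtain ⟨t0, ht0, rfl⟩ := ht
    rw [down_out_inr F]
    exact F.no_outof_tgt _ (Finset.mem_image_of_mem _ ht0)
  conserve := by
    rintro (j | k) hvS hvT
    · rw [down_in_inl F, down_out_inl F]
      apply F.conserve
      · intro hmem
        rw [Finset.mem_image] at hmem
        obtain ⟨x, hx, hx2⟩ := hmem
        apply hvS
        rw [Finset.mem_image]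
        refine ⟨x, hx, ?_⟩
        simp only [Sum.inl.injEq] at hx2
        rw [hx2]
      · intro hmem
        rw [Finset.mem_image] at hmem
        obtain ⟨x, _, hx2⟩ := hmem
        cases hx2
    · rw [down_in_inr F, down_out_inr F]
      apply F.conserve
      · intro hmem
        rw [Finset.mem_image] at hmem
        obtain ⟨x, _, hx2⟩ := hmem
        cases hx2
      · intro hmem
        rw [Finset.mem_image] at hmem
        obtain ⟨x, hx, hx2⟩ := hmem
        apply hvT
        rw [Finset.mem_image]
        refine ⟨x, hx, ?_⟩
        simp only [Sum.inr.injEq, Sum.inl.injEq] at hx2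
        rw [hx2]
  value := by
    rw [Finset.sum_image (by intro x _ y _ h; simpa using h)]
    have e : ∀ s ∈ S, ∑ u, fdown F.f (Sum.inl s) u = ∑ u, F.f (Sum.inl (Sum.inl s)) u :=
      fun s _ => down_out_inl F s
    rw [Finset.sum_congr rfl e]
    have hv := F.value
    rw [Finset.sum_image (by intro x _ y _ h; simpa using h)] at hv
    exact hv

end Down2

end SubdivAux
/-- **Bidirected subdivision preserves max-flow.**  Let `G` be a mixed graph
(with distinguished left and right directed edge sets `DL`, `DR` and
bidirected edges `B`) and let `G̃` be its bidirected subdivision.  Then for any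
`S, T ⊂ V`, the max-flow from `S` to `T′` in the flow network `G*_flow`
equals the max-flow from `S` to `T′` in the flow network `G̃*_flow`. -/
theorem subdivision_maxFlow_eq {n : ℕ} (DL DR B : Fin n → Fin n → Prop)
    (hB : ∀ i j, B i j → B j i)
    (S T : Finset (Fin n)) :
    maxFlow (flowEdgesLR DL DR B) (S.image Sum.inl) (T.image Sum.inr) =
      maxFlow
        (flowEdgesLR (subdivideEdges DL B) (subdivideEdges DR B)
          (fun _ _ => False))
        (S.image (fun i => Sum.inl (Sum.inl i)))
        (T.image (fun t => Sum.inr (Sum.inl t))) := by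
  unfold maxFlow
  congr 1
  ext r
  simp only [Set.mem_setOf_eq]
  constructor
  · rintro ⟨F⟩
    exact ⟨SubdivAux.upFlow hB F⟩
  · rintro ⟨F⟩
    exact ⟨SubdivAux.downFlow hB F⟩
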